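/- Fixed-scale almost orthogonality of wave packets: There is an absolute constant C such that the following holds. Let k ∈ ℤ, A > 0, and let 𝒯 be a finite collection of tiles P = I_P × ω_P with I_P dyadic, |I_P| = 2^{−k} and |ω_P| = 2^{k}, such that for any two distinct P, P' ∈ 𝒯 either ω_P = ω_{P'} and I_P ∩ I_{P'} = ∅, or (9/10)ω_P ∩ (9/10)ω_{P'} = ∅. For each P ∈ 𝒯 let Φ_P ∈ L²(ℝ) have Fourier transform supported in (9/10)ω_P and satisfy |Φ_P(x)| ≤ A · 2^{k/2} (1 + 2^{k} dist(x, I_P))^{−1000} for all x. Then for every F ∈ L²(ℝ), ‖Σ_{P∈𝒯} ⟨F, Φ_P⟩ Φ_P‖²_{L²(ℝ)} ≤ C A² Σ_{P∈𝒯} |⟨F, Φ_P⟩|², with C independent of k, 𝒯, the Φ_P and F. -/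

import Mathlib

open MeasureTheory Filter Set

/-- Spatial (dyadic) interval of the tile with data `(n, w)` at scale `k`:
`I_P = [n 2^{−k}, (n+1) 2^{−k}]`. -/
noncomputable def tileI (k : ℤ) (P : ℤ × ℝ) : Set ℝ :=
  Set.Icc ((P.1 : ℝ) * (2:ℝ)^(-k)) (((P.1 : ℝ) + 1) * (2:ℝ)^(-k))

/-- Frequency interval of the tile with data `(n, w)` at scale `k`: `ω_P = [w, w + 2^k]`. -/
noncomputable def tileOmega (k : ℤ) (P : ℤ × ℝ) : Set ℝ :=
  Set.Icc P.2 (P.2 + (2:ℝ)^k)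

/-- The concentric `9/10`-dilate of the frequency interval `ω_P`. -/
noncomputable def tileOmega910 (k : ℤ) (P : ℤ × ℝ) : Set ℝ :=
  Set.Icc (P.2 + (2:ℝ)^k / 20) (P.2 + 19 * (2:ℝ)^k / 20)

open scoped FourierTransform Convolution Topology

namespace FSAO2

lemma intprod {u h : ℝ → ℂ} (hu : Integrable u volume) (hh : Integrable h volume) {B : ℝ}
    (hB : ∀ x, ‖h x‖ ≤ B) (t : ℝ) : Integrable (fun x => u x * h (t - x)) volume := by
  have h1 : Integrable (fun x => h (t - x)) volume := hh.comp_sub_left t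
  have h2 := Integrable.bdd_mul hu h1.aestronglyMeasurable (ae_of_all _ fun x => hB _)
  simpa [mul_comm] using h2

lemma normconv {u h : ℝ → ℂ} (hu : Integrable u volume) {B : ℝ} (hB0 : 0 ≤ B)
    (hB : ∀ x, ‖h x‖ ≤ B) (t : ℝ) :
    ‖∫ x, u x * h (t - x)‖ ≤ (∫ x, ‖u x‖) * B := by
  calc ‖∫ x, u x * h (t - x)‖ ≤ ∫ x, ‖u x‖ * B := by
        apply norm_integral_le_of_norm_le (hu.norm.mul_const B)
        filter_upwards with x
        rw [norm_mul]
        exact mul_le_mul_of_nonneg_left (hB _) (norm_nonneg _)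
    _ = (∫ x, ‖u x‖) * B := by rw [integral_mul_const]

lemma contconv {u h : ℝ → ℂ} (hu : Integrable u volume) (hh : Integrable h volume) {B : ℝ}
    (hB : ∀ x, ‖h x‖ ≤ B) : Continuous (fun t => ∫ x, u x * h (t - x)) := by
  have hB0 : 0 ≤ B := le_trans (norm_nonneg _) (hB 0)
  have hchoice : ∀ n : ℕ, ∃ g : ℝ → ℂ, HasCompactSupport g ∧ (∫ x, ‖u x - g x‖) ≤ 1/(n+1) ∧
      Continuous g ∧ Integrable g volume :=
    fun n => hu.exists_hasCompactSupport_integral_sub_le (by positivity)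
  choose g hgc hgl hgcont hgi using hchoice
  have hVc : ∀ n : ℕ, Continuous (fun t => ∫ x, g n x * h (t - x)) := by
    intro n
    have hc := (hgc n).continuous_convolution_left (ContinuousLinearMap.mul ℂ ℂ) (hgcont n)
      (hh.locallyIntegrable)
    have heq : (g n ⋆[ContinuousLinearMap.mul ℂ ℂ, volume] h) = fun t => ∫ x, g n x * h (t - x) := by
      funext t
      rw [convolution_def]
      simp [ContinuousLinearMap.mul_apply']
    rwa [heq] at hc
  have key : TendstoUniformly (fun n t => ∫ x, g n x * h (t - x))
      (fun t => ∫ x, u x * h (t - x)) atTop := by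
    rw [Metric.tendstoUniformly_iff]
    intro ε hε
    have hten : Tendsto (fun n : ℕ => (1/((n:ℝ)+1)) * B) atTop (𝓝 (0 * B)) :=
      tendsto_one_div_add_atTop_nhds_zero_nat.mul_const B
    rw [zero_mul] at hten
    filter_upwards [hten.eventually_lt_const hε] with n hn t
    rw [dist_eq_norm]
    have hsub : (∫ x, u x * h (t - x)) - (∫ x, g n x * h (t - x))
        = ∫ x, (u x - g n x) * h (t - x) := by
      rw [← integral_sub (intprod hu hh hB t) (intprod (hgi n) hh hB t)]
      simp [sub_mul]
    calc ‖(∫ x, u x * h (t - x)) - (∫ x, g n x * h (t - x))‖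
        = ‖∫ x, (u x - g n x) * h (t - x)‖ := by rw [hsub]
      _ ≤ (∫ x, ‖u x - g n x‖) * B := normconv (hu.sub (hgi n)) hB0 hB t
      _ ≤ (1/((n:ℝ)+1)) * B := mul_le_mul_of_nonneg_right (hgl n) hB0
      _ < ε := hn
  exact key.continuous (Eventually.of_forall hVc).frequently


lemma fourier_mul_conj_eq_zero {Φ Ψ : ℝ → ℂ} (hΦ : Integrable Φ volume)
    (hΨ : Integrable Ψ volume) {B : ℝ} (hΨb : ∀ x, ‖Ψ x‖ ≤ B)
    (h0 : ∀ ξ, 𝓕 Φ ξ = 0 ∨ 𝓕 Ψ ξ = 0) :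
    ∫ x, Φ x * (starRingEnd ℂ) (Ψ x) = 0 := by
  set h : ℝ → ℂ := fun x => (starRingEnd ℂ) (Ψ (-x)) with hh_def
  have h1 : Integrable (fun x => Ψ (-x)) volume := hΨ.comp_neg
  have hhm : Integrable h volume := by
    refine h1.norm.mono' (Complex.continuous_conj.comp_aestronglyMeasurable h1.aestronglyMeasurable) ?_
    filter_upwards with x
    simp [hh_def]
  have hhB : ∀ x, ‖h x‖ ≤ B := fun x => by simpa [hh_def] using hΨb (-x)
  set W : ℝ → ℂ := fun t => ∫ x, Φ x * h (t - x) with hW_def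
  have hWconv : (Φ ⋆[ContinuousLinearMap.mul ℂ ℂ, volume] h) = W := by
    funext t
    rw [convolution_def]
    simp [ContinuousLinearMap.mul_apply', hW_def]
  have hWi : Integrable W volume := by
    rw [← hWconv]
    exact MeasureTheory.Integrable.integrable_convolution (ContinuousLinearMap.mul ℂ ℂ) hΦ hhm
  have hWcont : Continuous W := contconv hΦ hhm hhB
  -- the Fourier transform of W vanishes identically
  have hFW : ∀ ξ, 𝓕 W ξ = 0 := by
    intro ξ
    set e : ℝ → ℂ := fun v => Complex.exp ((↑(-2 * Real.pi * v * ξ) : ℝ) * Complex.I) with he_def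
    have he_norm : ∀ v, ‖e v‖ = 1 := fun v => by
      simp [he_def, Complex.norm_exp]
    have he_cont : Continuous e := by fun_prop
    have he_add : ∀ t x : ℝ, e (t + x) = e t * e x := by
      intro t x
      rw [he_def]
      simp only
      rw [← Complex.exp_add]
      congr 1
      push_cast
      ring
    have he_conj : ∀ x : ℝ, (starRingEnd ℂ) (e x) = e (-x) := by
      intro x
      rw [he_def]
      simp only
      rw [← Complex.exp_conj]
      congr 1
      simp only [map_mul, Complex.conj_I, Complex.conj_ofReal]
      push_cast
      ring
    have hbase : Integrable (fun p : ℝ × ℝ => Φ p.2 * h (p.1 - p.2)) (volume.prod volume) := by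
      have := hΦ.convolution_integrand (ContinuousLinearMap.mul ℂ ℂ) hhm
      simpa [ContinuousLinearMap.mul_apply'] using this
    have hint : Integrable (fun p : ℝ × ℝ => e p.1 * (Φ p.2 * h (p.1 - p.2))) (volume.prod volume) :=
      hbase.bdd_mul ((he_cont.comp continuous_fst).aestronglyMeasurable)
        (ae_of_all _ fun p => le_of_eq (he_norm p.1))
    have hFh : 𝓕 h ξ = (starRingEnd ℂ) (𝓕 Ψ ξ) := by
      rw [Real.fourier_real_eq_integral_exp_smul, Real.fourier_real_eq_integral_exp_smul]
      rw [← integral_conj]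
      rw [← integral_neg_eq_self (fun x => Complex.exp ((↑(-2 * Real.pi * x * ξ) : ℝ) * Complex.I) • h x) volume]
      congr 1
      funext x
      simp only [smul_eq_mul, hh_def, neg_neg, map_mul]
      rw [show (starRingEnd ℂ) (Complex.exp ((↑(-2 * Real.pi * x * ξ) : ℝ) * Complex.I))
            = e (-x) from he_conj x]
    have step1 : 𝓕 W ξ = ∫ t, ∫ x, e t * (Φ x * h (t - x)) := by
      rw [Real.fourier_real_eq_integral_exp_smul]
      congr 1
      funext t
      rw [smul_eq_mul, hW_def]
      simp only
      rw [← integral_const_mul]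
    have step2 : (∫ t, ∫ x, e t * (Φ x * h (t - x))) = ∫ x, ∫ t, e t * (Φ x * h (t - x)) :=
      integral_integral_swap hint
    have step3 : ∀ x, (∫ t, e t * (Φ x * h (t - x))) = (e x * Φ x) * ∫ s, e s * h s := by
      intro x
      have r1 : (∫ t, e t * (Φ x * h (t - x))) = Φ x * ∫ t, e t * h (t - x) := by
        rw [← integral_const_mul]
        congr 1
        funext t
        ring
      have r2 : (∫ t, e t * h (t - x)) = ∫ t, e (t + x) * h (t + x - x) :=
        (integral_add_right_eq_self (fun t => e t * h (t - x)) x).symm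
      have r3 : (∫ t, e (t + x) * h (t + x - x)) = e x * ∫ s, e s * h s := by
        rw [← integral_const_mul]
        congr 1
        funext t
        rw [he_add t x, add_sub_cancel_right]
        ring
      rw [r1, r2, r3]
      ring
    have step4 : (∫ x, (e x * Φ x) * ∫ s, e s * h s)
        = (∫ x, e x * Φ x) * ∫ s, e s * h s := by
      rw [integral_mul_const]
    have hWF : 𝓕 W ξ
        = 𝓕 Φ ξ * 𝓕 h ξ := by
      rw [step1, step2]
      calc (∫ x, ∫ t, e t * (Φ x * h (t - x)))
          = ∫ x, (e x * Φ x) * ∫ s, e s * h s := by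
            congr 1; funext x; exact step3 x
        _ = (∫ x, e x * Φ x) * ∫ s, e s * h s := step4
        _ = 𝓕 Φ ξ * 𝓕 h ξ := by
            rw [Real.fourier_real_eq_integral_exp_smul, Real.fourier_real_eq_integral_exp_smul]
            simp only [smul_eq_mul, he_def]
    rw [hWF, hFh]
    rcases h0 ξ with h' | h'
    · rw [h', zero_mul]
    · rw [h', map_zero, mul_zero]
  -- conclude by Fourier inversion at 0
  have hFWfun : 𝓕 W = (fun _ => (0 : ℂ)) := funext hFW
  have hFWi : Integrable (𝓕 W) volume := by
    rw [hFWfun]; exact integrable_zero _ _ _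
  have hinv := hWi.fourierInv_fourier_eq hFWi (hWcont.continuousAt (x := 0))
  have hzero : 𝓕⁻ (𝓕 W) 0 = 0 := by
    rw [hFWfun]
    rw [Real.fourierInv_eq]
    simp
  have hW0 : W 0 = ∫ x, Φ x * (starRingEnd ℂ) (Ψ x) := by
    rw [hW_def]
    simp only [zero_sub, hh_def, neg_neg]
  rw [← hW0, ← hinv, hzero]

lemma le_infDist' {s : Set ℝ} (hs : s.Nonempty) {x c : ℝ} (h : ∀ y ∈ s, c ≤ dist x y) :
    c ≤ Metric.infDist x s := by
  rw [Metric.infDist_eq_iInf]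
  haveI := hs.to_subtype
  exact le_ciInf fun y => h y y.2

lemma tileI_nonempty (k : ℤ) (P : ℤ × ℝ) : (tileI k P).Nonempty := by
  have ha : (0:ℝ) < (2:ℝ)^(-k) := zpow_pos two_pos _
  exact ⟨(P.1:ℝ) * (2:ℝ)^(-k), le_rfl, by nlinarith⟩

lemma infDist_tileI_ge_mid (k : ℤ) (P : ℤ × ℝ) (x : ℝ) :
    |x - ((P.1:ℝ) + 2⁻¹) * (2:ℝ)^(-k)| - (2:ℝ)^(-k)/2 ≤ Metric.infDist x (tileI k P) := by
  set a := (2:ℝ)^(-k) with ha_def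
  set m := ((P.1:ℝ) + 2⁻¹) * a with hm_def
  apply le_infDist' (tileI_nonempty k P)
  intro y hy
  obtain ⟨hy1, hy2⟩ := hy
  rw [Real.dist_eq]
  have h1 : |x - m| ≤ |x - y| + |y - m| := abs_sub_le x y m
  have hm1 : ((P.1:ℝ) + 2⁻¹) * a = (P.1:ℝ) * a + a/2 := by ring
  have hm2 : ((P.1:ℝ) + 1) * a = (P.1:ℝ) * a + a := by ring
  have h2 : |y - m| ≤ a/2 := by
    rw [abs_le, hm_def, hm1]
    rw [← ha_def] at hy1 hy2
    constructor <;> linarith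
  linarith

lemma infDist_tileI_ge_left (k : ℤ) (P : ℤ × ℝ) (x : ℝ) :
    (P.1:ℝ) * (2:ℝ)^(-k) - x ≤ Metric.infDist x (tileI k P) := by
  apply le_infDist' (tileI_nonempty k P)
  intro y hy
  obtain ⟨hy1, hy2⟩ := hy
  rw [Real.dist_eq]
  have := neg_abs_le (x - y)
  linarith [le_abs_self (x - y), neg_abs_le (x - y)]

lemma infDist_tileI_ge_right (k : ℤ) (P : ℤ × ℝ) (x : ℝ) :
    x - ((P.1:ℝ) + 1) * (2:ℝ)^(-k) ≤ Metric.infDist x (tileI k P) := by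
  apply le_infDist' (tileI_nonempty k P)
  intro y hy
  obtain ⟨hy1, hy2⟩ := hy
  rw [Real.dist_eq]
  linarith [le_abs_self (x - y)]

lemma sep_bound (k : ℤ) (P P' : ℤ × ℝ) (x : ℝ) :
    (1 + |((P.1 - P'.1 : ℤ):ℝ)|)/2 ≤
      (1 + (2:ℝ)^k * Metric.infDist x (tileI k P)) *
      (1 + (2:ℝ)^k * Metric.infDist x (tileI k P')) := by
  set t := (2:ℝ)^k with ht_def
  set a := (2:ℝ)^(-k) with ha_def
  have ht : 0 < t := zpow_pos two_pos _
  have ha : 0 < a := zpow_pos two_pos _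
  have hta : t * a = 1 := by
    rw [ht_def, ha_def, ← zpow_add₀ (two_ne_zero)]
    simp
  set d := Metric.infDist x (tileI k P) with hd_def
  set d' := Metric.infDist x (tileI k P') with hd'_def
  have hd0 : 0 ≤ d := Metric.infDist_nonneg
  have hd'0 : 0 ≤ d' := Metric.infDist_nonneg
  have hΔ : ((P.1 - P'.1 : ℤ):ℝ) = (P.1:ℝ) - (P'.1:ℝ) := by push_cast; ring
  have h1 : (|((P.1 - P'.1 : ℤ):ℝ)| - 1) * a ≤ d + d' := by
    rcases le_total P.1 P'.1 with hle | hle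
    · have hcast : (P.1:ℝ) ≤ (P'.1:ℝ) := by exact_mod_cast hle
      rw [hΔ, abs_of_nonpos (by linarith)]
      have e1 := infDist_tileI_ge_right k P x
      have e2 := infDist_tileI_ge_left k P' x
      rw [← ht_def, ← ha_def] at *
      nlinarith
    · have hcast : (P'.1:ℝ) ≤ (P.1:ℝ) := by exact_mod_cast hle
      rw [hΔ, abs_of_nonneg (by linarith)]
      have e1 := infDist_tileI_ge_left k P x
      have e2 := infDist_tileI_ge_right k P' x
      nlinarith
  have h2 : |((P.1 - P'.1 : ℤ):ℝ)| - 1 ≤ t * (d + d') := by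
    have := mul_le_mul_of_nonneg_left h1 ht.le
    calc |((P.1 - P'.1 : ℤ):ℝ)| - 1 = (|((P.1 - P'.1 : ℤ):ℝ)| - 1) * (t * a) := by
          rw [hta]; ring
      _ = t * ((|((P.1 - P'.1 : ℤ):ℝ)| - 1) * a) := by ring
      _ ≤ t * (d + d') := this
  nlinarith [mul_nonneg (mul_nonneg ht.le hd0) (mul_nonneg ht.le hd'0)]

noncomputable def Jconst : ℝ := ∫ y : ℝ, (1 + ‖y‖) ^ (-(998:ℝ))

lemma Jconst_nonneg : 0 ≤ Jconst :=
  integral_nonneg fun y => Real.rpow_nonneg (by positivity) _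

lemma base_int {r : ℝ} (hr : 1 < r) : Integrable (fun y : ℝ => (1 + ‖y‖) ^ (-r)) volume := by
  have : ((Module.finrank ℝ ℝ : ℝ)) < r := by simpa using hr
  exact integrable_one_add_norm this

lemma scaled_int {r : ℝ} (hr : 1 < r) {t : ℝ} (ht : t ≠ 0) (m : ℝ) :
    Integrable (fun x : ℝ => (1 + ‖t * (x - m)‖) ^ (-r)) volume :=
  ((base_int hr).comp_mul_left' ht).comp_sub_right m

lemma scaled_integral {r : ℝ} {t : ℝ} (ht : 0 < t) (m : ℝ) :
    (∫ x : ℝ, (1 + ‖t * (x - m)‖) ^ (-r)) = t⁻¹ * ∫ y : ℝ, (1 + ‖y‖) ^ (-r) := by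
  have h1 := integral_sub_right_eq_self (μ := volume) (fun x : ℝ => (1 + ‖t * x‖) ^ (-r)) m
  rw [h1, Measure.integral_comp_mul_left (fun y : ℝ => (1 + ‖y‖) ^ (-r)) t,
    abs_of_pos (inv_pos.2 ht), smul_eq_mul]

lemma half_rpow_neg {y : ℝ} (hy : 0 < y) (r : ℝ) : (y/2)^(-r) = 2^r * y^(-r) := by
  rw [Real.div_rpow hy.le (by norm_num : (0:ℝ) ≤ 2), Real.rpow_neg (by norm_num : (0:ℝ) ≤ 2)]
  field_simp

lemma mid_bound (k : ℤ) (P : ℤ × ℝ) (x : ℝ) {r : ℝ} (hr : 0 ≤ r) :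
    (1 + (2:ℝ)^k * Metric.infDist x (tileI k P)) ^ (-r)
      ≤ (2:ℝ)^r * (1 + ‖(2:ℝ)^k * (x - ((P.1:ℝ) + 2⁻¹) * (2:ℝ)^(-k))‖) ^ (-r) := by
  set t := (2:ℝ)^k with ht_def
  set a := (2:ℝ)^(-k) with ha_def
  set m := ((P.1:ℝ) + 2⁻¹) * a with hm_def
  have ht : 0 < t := zpow_pos two_pos _
  have ha : 0 < a := zpow_pos two_pos _
  have hta : t * a = 1 := by
    rw [ht_def, ha_def, ← zpow_add₀ (two_ne_zero)]; simp
  set d := Metric.infDist x (tileI k P) with hd_def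
  have hd0 : 0 ≤ d := Metric.infDist_nonneg
  have hq : 0 < 1 + ‖t * (x - m)‖ := by positivity
  have hnorm : ‖t * (x - m)‖ = t * |x - m| := by
    rw [norm_mul, Real.norm_eq_abs, Real.norm_eq_abs, abs_of_pos ht]
  have h5 := infDist_tileI_ge_mid k P x
  rw [← ha_def, ← hm_def, ← hd_def] at h5
  have hmain : (1 + ‖t * (x - m)‖)/2 ≤ 1 + t * d := by
    have h6 : t * (|x - m| - a/2) ≤ t * d := mul_le_mul_of_nonneg_left h5 ht.le
    have h7 : t * (|x - m| - a/2) = t * |x - m| - (t*a)/2 := by ring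
    rw [h7, hta] at h6
    rw [hnorm]
    have : 0 ≤ t * |x - m| := by positivity
    linarith
  calc (1 + t * d) ^ (-r) ≤ ((1 + ‖t * (x - m)‖)/2) ^ (-r) :=
        Real.rpow_le_rpow_of_nonpos (by positivity) hmain (neg_nonpos.2 hr)
    _ = 2^r * (1 + ‖t * (x - m)‖) ^ (-r) := half_rpow_neg hq r

lemma pair_pointwise (k : ℤ) {A : ℝ} (hA : 0 ≤ A) (P P' : ℤ × ℝ) {Φ Ψ : ℝ → ℂ}
    (hΦd : ∀ x, ‖Φ x‖ ≤ A * Real.sqrt ((2:ℝ)^k) *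
      (1 + (2:ℝ)^k * Metric.infDist x (tileI k P)) ^ (-(1000:ℝ)))
    (hΨd : ∀ x, ‖Ψ x‖ ≤ A * Real.sqrt ((2:ℝ)^k) *
      (1 + (2:ℝ)^k * Metric.infDist x (tileI k P')) ^ (-(1000:ℝ))) (x : ℝ) :
    ‖Φ x * (starRingEnd ℂ) (Ψ x)‖ ≤
      ((2:ℝ)^(1000:ℝ) * ((1 + |((P.1 - P'.1 : ℤ):ℝ)|) ^ (-(2:ℝ))) * (A^2 * (2:ℝ)^k))
        * (1 + ‖(2:ℝ)^k * (x - ((P.1:ℝ) + 2⁻¹) * (2:ℝ)^(-k))‖) ^ (-(998:ℝ)) := by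
  set t := (2:ℝ)^k with ht_def
  have ht : 0 < t := zpow_pos two_pos _
  set d := Metric.infDist x (tileI k P) with hd_def
  set d' := Metric.infDist x (tileI k P') with hd'_def
  have hd0 : 0 ≤ d := Metric.infDist_nonneg
  have hd'0 : 0 ≤ d' := Metric.infDist_nonneg
  set u := 1 + t * d with hu_def
  set v := 1 + t * d' with hv_def
  have hu0 : 0 < u := by positivity
  have hv0 : 0 < v := by positivity
  have hu1 : 1 ≤ u := by nlinarith
  have hv1 : 1 ≤ v := by nlinarith
  set Δ := |((P.1 - P'.1 : ℤ):ℝ)| with hΔ_def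
  have hΔ0 : 0 ≤ Δ := abs_nonneg _
  set q := 1 + ‖t * (x - ((P.1:ℝ) + 2⁻¹) * (2:ℝ)^(-k))‖ with hq_def
  have hq0 : 0 < q := by positivity
  have sep : (1 + Δ)/2 ≤ u * v := sep_bound k P P' x
  -- splitting of the exponents
  have hu_split : u ^ (-(1000:ℝ)) = u ^ (-(2:ℝ)) * u ^ (-(998:ℝ)) := by
    rw [← Real.rpow_add hu0]; norm_num
  have hv_split : v ^ (-(1000:ℝ)) = v ^ (-(2:ℝ)) * v ^ (-(998:ℝ)) := by
    rw [← Real.rpow_add hv0]; norm_num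
  have b1 : (u*v) ^ (-(2:ℝ)) ≤ 2^(2:ℝ) * (1 + Δ) ^ (-(2:ℝ)) := by
    calc (u*v) ^ (-(2:ℝ)) ≤ ((1 + Δ)/2) ^ (-(2:ℝ)) :=
          Real.rpow_le_rpow_of_nonpos (by positivity) sep (by norm_num)
      _ = 2^(2:ℝ) * (1 + Δ) ^ (-(2:ℝ)) := half_rpow_neg (by positivity) 2
  have b2 : u ^ (-(998:ℝ)) ≤ 2^(998:ℝ) * q ^ (-(998:ℝ)) := by
    have := mid_bound k P x (r := 998) (by norm_num)
    rw [← ht_def, ← hd_def, ← hu_def, ← hq_def] at this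
    exact this
  have b3 : v ^ (-(998:ℝ)) ≤ 1 := Real.rpow_le_one_of_one_le_of_nonpos hv1 (by norm_num)
  have e2 : u ^ (-(1000:ℝ)) * v ^ (-(1000:ℝ)) ≤
      (2^(2:ℝ) * (1 + Δ) ^ (-(2:ℝ))) * (2^(998:ℝ) * q ^ (-(998:ℝ))) := by
    have hsplit : u ^ (-(1000:ℝ)) * v ^ (-(1000:ℝ)) =
        ((u*v) ^ (-(2:ℝ))) * (u ^ (-(998:ℝ)) * v ^ (-(998:ℝ))) := by
      rw [Real.mul_rpow hu0.le hv0.le, hu_split, hv_split]; ring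
    rw [hsplit]
    have m1 : u ^ (-(998:ℝ)) * v ^ (-(998:ℝ)) ≤ (2^(998:ℝ) * q ^ (-(998:ℝ))) * 1 :=
      mul_le_mul b2 b3 (by positivity) (by positivity)
    rw [mul_one] at m1
    exact mul_le_mul b1 m1 (by positivity) (by positivity)
  have h2s : (2:ℝ)^(2:ℝ) * (2:ℝ)^(998:ℝ) = (2:ℝ)^(1000:ℝ) := by
    rw [← Real.rpow_add (by norm_num)]; norm_num
  calc ‖Φ x * (starRingEnd ℂ) (Ψ x)‖ = ‖Φ x‖ * ‖Ψ x‖ := by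
        rw [norm_mul, RCLike.norm_conj]
    _ ≤ (A * Real.sqrt t * u ^ (-(1000:ℝ))) * (A * Real.sqrt t * v ^ (-(1000:ℝ))) := by
        apply mul_le_mul (hΦd x) (hΨd x) (norm_nonneg _) (by positivity)
    _ = (A^2 * (Real.sqrt t * Real.sqrt t)) * (u ^ (-(1000:ℝ)) * v ^ (-(1000:ℝ))) := by ring
    _ = (A^2 * t) * (u ^ (-(1000:ℝ)) * v ^ (-(1000:ℝ))) := by
        rw [Real.mul_self_sqrt ht.le]
    _ ≤ (A^2 * t) * ((2^(2:ℝ) * (1 + Δ) ^ (-(2:ℝ))) * (2^(998:ℝ) * q ^ (-(998:ℝ)))) :=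
        mul_le_mul_of_nonneg_left e2 (by positivity)
    _ = ((2:ℝ)^(1000:ℝ) * ((1 + Δ) ^ (-(2:ℝ))) * (A^2 * t)) * q ^ (-(998:ℝ)) := by
        rw [← h2s]; ring

lemma Jconst_def : Jconst = ∫ y : ℝ, (1 + ‖y‖) ^ (-(998:ℝ)) := rfl

noncomputable def kap (m : ℤ) : ℝ := (1 + |(m:ℝ)|) ^ (-(2:ℝ))

lemma kap_nonneg (m : ℤ) : 0 ≤ kap m := Real.rpow_nonneg (by positivity) _

noncomputable def Kconst : ℝ := (2:ℝ)^(1000:ℝ) * (Jconst + 1)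

lemma Kconst_pos : 0 < Kconst := by
  have := Jconst_nonneg
  unfold Kconst
  positivity

/-- Integrability of the product of two wave packets. -/
lemma pair_integrable (k : ℤ) {A : ℝ} (hA : 0 ≤ A) (P P' : ℤ × ℝ) {Φ Ψ : ℝ → ℂ}
    (hΦm : AEStronglyMeasurable Φ volume) (hΨm : AEStronglyMeasurable Ψ volume)
    (hΦd : ∀ x, ‖Φ x‖ ≤ A * Real.sqrt ((2:ℝ)^k) *
      (1 + (2:ℝ)^k * Metric.infDist x (tileI k P)) ^ (-(1000:ℝ)))
    (hΨd : ∀ x, ‖Ψ x‖ ≤ A * Real.sqrt ((2:ℝ)^k) *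
      (1 + (2:ℝ)^k * Metric.infDist x (tileI k P')) ^ (-(1000:ℝ))) :
    Integrable (fun x => Φ x * (starRingEnd ℂ) (Ψ x)) volume := by
  have ht : (0:ℝ) < (2:ℝ)^k := zpow_pos two_pos _
  refine Integrable.mono'
    (((scaled_int (by norm_num : (1:ℝ) < 998) ht.ne' (((P.1:ℝ) + 2⁻¹) * (2:ℝ)^(-k))).const_mul
      ((2:ℝ)^(1000:ℝ) * ((1 + |((P.1 - P'.1 : ℤ):ℝ)|) ^ (-(2:ℝ))) * (A^2 * (2:ℝ)^k))))
    (hΦm.mul (Complex.continuous_conj.comp_aestronglyMeasurable hΨm)) ?_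
  filter_upwards with x
  exact pair_pointwise k hA P P' hΦd hΨd x

/-- The pair inner-product bound. -/
lemma pair_norm_integral_le (k : ℤ) {A : ℝ} (hA : 0 ≤ A) (P P' : ℤ × ℝ) {Φ Ψ : ℝ → ℂ}
    (hΦm : AEStronglyMeasurable Φ volume) (hΨm : AEStronglyMeasurable Ψ volume)
    (hΦd : ∀ x, ‖Φ x‖ ≤ A * Real.sqrt ((2:ℝ)^k) *
      (1 + (2:ℝ)^k * Metric.infDist x (tileI k P)) ^ (-(1000:ℝ)))
    (hΨd : ∀ x, ‖Ψ x‖ ≤ A * Real.sqrt ((2:ℝ)^k) *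
      (1 + (2:ℝ)^k * Metric.infDist x (tileI k P')) ^ (-(1000:ℝ))) :
    ‖∫ x, Φ x * (starRingEnd ℂ) (Ψ x)‖ ≤ Kconst * A^2 * kap (P.1 - P'.1) := by
  have ht : (0:ℝ) < (2:ℝ)^k := zpow_pos two_pos _
  set m : ℝ := ((P.1:ℝ) + 2⁻¹) * (2:ℝ)^(-k) with hm_def
  set κ : ℝ := (1 + |((P.1 - P'.1 : ℤ):ℝ)|) ^ (-(2:ℝ)) with hκ_def
  have hκ0 : 0 ≤ κ := Real.rpow_nonneg (by positivity) _
  set M : ℝ := (2:ℝ)^(1000:ℝ) * κ * (A^2 * (2:ℝ)^k) with hM_def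
  have hM0 : 0 ≤ M := by positivity
  have step : ‖∫ x, Φ x * (starRingEnd ℂ) (Ψ x)‖
      ≤ ∫ x, M * (1 + ‖(2:ℝ)^k * (x - m)‖) ^ (-(998:ℝ)) := by
    apply norm_integral_le_of_norm_le
      ((scaled_int (by norm_num : (1:ℝ) < 998) ht.ne' m).const_mul M)
    filter_upwards with x
    exact pair_pointwise k hA P P' hΦd hΨd x
  have hval : (∫ x, M * (1 + ‖(2:ℝ)^k * (x - m)‖) ^ (-(998:ℝ)))
      = M * (((2:ℝ)^k)⁻¹ * Jconst) := by
    rw [integral_const_mul, scaled_integral ht m, Jconst_def]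
  have hJ := Jconst_nonneg
  have htt : (2:ℝ)^k * ((2:ℝ)^k)⁻¹ = 1 := mul_inv_cancel₀ ht.ne'
  calc ‖∫ x, Φ x * (starRingEnd ℂ) (Ψ x)‖
      ≤ M * (((2:ℝ)^k)⁻¹ * Jconst) := by rw [← hval]; exact step
    _ = (2:ℝ)^(1000:ℝ) * Jconst * A^2 * κ * ((2:ℝ)^k * ((2:ℝ)^k)⁻¹) := by
        rw [hM_def]; ring
    _ = (2:ℝ)^(1000:ℝ) * Jconst * A^2 * κ := by rw [htt, mul_one]
    _ ≤ Kconst * A^2 * κ := by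
        unfold Kconst
        have h2 : (0:ℝ) < (2:ℝ)^(1000:ℝ) := by positivity
        nlinarith [sq_nonneg A, mul_nonneg (mul_nonneg h2.le (sq_nonneg A)) hκ0]
    _ = Kconst * A^2 * kap (P.1 - P'.1) := by rw [hκ_def]; rfl

/-- Integrability of a single wave packet. -/
lemma decay_integrable (k : ℤ) {A : ℝ} (hA : 0 ≤ A) (P : ℤ × ℝ) {Φ : ℝ → ℂ}
    (hΦm : AEStronglyMeasurable Φ volume)
    (hΦd : ∀ x, ‖Φ x‖ ≤ A * Real.sqrt ((2:ℝ)^k) *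
      (1 + (2:ℝ)^k * Metric.infDist x (tileI k P)) ^ (-(1000:ℝ))) :
    Integrable Φ volume := by
  have ht : (0:ℝ) < (2:ℝ)^k := zpow_pos two_pos _
  refine Integrable.mono'
    ((scaled_int (by norm_num : (1:ℝ) < 1000) ht.ne' (((P.1:ℝ) + 2⁻¹) * (2:ℝ)^(-k))).const_mul
      (A * Real.sqrt ((2:ℝ)^k) * (2:ℝ)^(1000:ℝ))) hΦm ?_
  filter_upwards with x
  calc ‖Φ x‖ ≤ A * Real.sqrt ((2:ℝ)^k) *
        (1 + (2:ℝ)^k * Metric.infDist x (tileI k P)) ^ (-(1000:ℝ)) := hΦd x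
    _ ≤ A * Real.sqrt ((2:ℝ)^k) * ((2:ℝ)^(1000:ℝ) *
        (1 + ‖(2:ℝ)^k * (x - ((P.1:ℝ) + 2⁻¹) * (2:ℝ)^(-k))‖) ^ (-(1000:ℝ))) := by
        apply mul_le_mul_of_nonneg_left (mid_bound k P x (by norm_num)) (by positivity)
    _ = A * Real.sqrt ((2:ℝ)^k) * (2:ℝ)^(1000:ℝ) *
        (1 + ‖(2:ℝ)^k * (x - ((P.1:ℝ) + 2⁻¹) * (2:ℝ)^(-k))‖) ^ (-(1000:ℝ)) := by ring

lemma decay_bounded (k : ℤ) {A : ℝ} (hA : 0 ≤ A) (P : ℤ × ℝ) {Φ : ℝ → ℂ}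
    (hΦd : ∀ x, ‖Φ x‖ ≤ A * Real.sqrt ((2:ℝ)^k) *
      (1 + (2:ℝ)^k * Metric.infDist x (tileI k P)) ^ (-(1000:ℝ))) :
    ∀ x, ‖Φ x‖ ≤ A * Real.sqrt ((2:ℝ)^k) := by
  intro x
  have ht : (0:ℝ) < (2:ℝ)^k := zpow_pos two_pos _
  have hd0 : 0 ≤ Metric.infDist x (tileI k P) := Metric.infDist_nonneg
  have h1 : 1 ≤ 1 + (2:ℝ)^k * Metric.infDist x (tileI k P) := by nlinarith
  have h2 : (1 + (2:ℝ)^k * Metric.infDist x (tileI k P)) ^ (-(1000:ℝ)) ≤ 1 :=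
    Real.rpow_le_one_of_one_le_of_nonpos h1 (by norm_num)
  calc ‖Φ x‖ ≤ A * Real.sqrt ((2:ℝ)^k) *
        (1 + (2:ℝ)^k * Metric.infDist x (tileI k P)) ^ (-(1000:ℝ)) := hΦd x
    _ ≤ A * Real.sqrt ((2:ℝ)^k) * 1 := mul_le_mul_of_nonneg_left h2 (by positivity)
    _ = A * Real.sqrt ((2:ℝ)^k) := mul_one _

lemma kap_summable : Summable kap := by
  have base : Summable (fun n : ℕ => 1 / ((n:ℝ))^(2:ℝ)) :=
    Real.summable_one_div_nat_rpow.2 (by norm_num)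
  have s2 : Summable (fun n : ℕ => 1 / (((n+1:ℕ)):ℝ)^(2:ℝ)) :=
    base.comp_injective (add_left_injective 1)
  have main : Summable (fun n : ℕ => (1 + (n:ℝ)) ^ (-(2:ℝ))) := by
    apply s2.congr
    intro n
    rw [Real.rpow_neg (by positivity), one_div]
    congr 1
    push_cast
    rw [add_comm]
  apply Summable.of_nat_of_neg
  · apply main.congr
    intro n
    unfold kap
    norm_num
  · apply main.congr
    intro n
    unfold kap
    norm_num

noncomputable def S0 : ℝ := ∑' m : ℤ, kap m

lemma S0_nonneg : 0 ≤ S0 := tsum_nonneg kap_nonneg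

lemma inner_sum_le (𝒯 : Finset (ℤ × ℝ)) (P : ℤ × ℝ) :
    (∑ P' ∈ 𝒯, if P'.2 = P.2 then kap (P.1 - P'.1) else 0) ≤ S0 := by
  rw [Finset.sum_ite, Finset.sum_const_zero, add_zero]
  have hinj : ∀ x ∈ 𝒯.filter (fun P' => P'.2 = P.2), ∀ y ∈ 𝒯.filter (fun P' => P'.2 = P.2),
      P.1 - x.1 = P.1 - y.1 → x = y := by
    intro x hx y hy hxy
    have hx2 := (Finset.mem_filter.1 hx).2
    have hy2 := (Finset.mem_filter.1 hy).2
    have : x.1 = y.1 := by omega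
    exact Prod.ext this (hx2.trans hy2.symm)
  rw [show (∑ P' ∈ 𝒯.filter (fun P' => P'.2 = P.2), kap (P.1 - P'.1))
      = ∑ m ∈ (𝒯.filter (fun P' => P'.2 = P.2)).image (fun P' => P.1 - P'.1), kap m from
    (Finset.sum_image hinj).symm]
  exact Summable.sum_le_tsum _ (fun _ _ => kap_nonneg _) kap_summable

/-- Expansion of the `L²` norm of the synthesised sum. -/
lemma expand_L2 (𝒯 : Finset (ℤ × ℝ)) (Φ : (ℤ × ℝ) → ℝ → ℂ) (c : (ℤ × ℝ) → ℂ)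
    (hIprod : ∀ P ∈ 𝒯, ∀ P' ∈ 𝒯,
      Integrable (fun x => Φ P x * (starRingEnd ℂ) (Φ P' x)) volume) :
    (∫ x : ℝ, ‖∑ P ∈ 𝒯, c P * Φ P x‖^2)
      = (∑ P ∈ 𝒯, ∑ P' ∈ 𝒯, (c P * (starRingEnd ℂ) (c P')) *
          ∫ x, Φ P x * (starRingEnd ℂ) (Φ P' x)).re := by
  have hptw : ∀ x : ℝ, ((‖∑ P ∈ 𝒯, c P * Φ P x‖:ℝ)^2)
      = (∑ P ∈ 𝒯, ∑ P' ∈ 𝒯, (c P * (starRingEnd ℂ) (c P')) *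
          (Φ P x * (starRingEnd ℂ) (Φ P' x))).re := by
    intro x
    have h1 : (∑ P ∈ 𝒯, c P * Φ P x) * (starRingEnd ℂ) (∑ P' ∈ 𝒯, c P' * Φ P' x)
        = ∑ P ∈ 𝒯, ∑ P' ∈ 𝒯, (c P * (starRingEnd ℂ) (c P')) *
          (Φ P x * (starRingEnd ℂ) (Φ P' x)) := by
      rw [map_sum, Finset.sum_mul_sum]
      refine Finset.sum_congr rfl fun P _ => Finset.sum_congr rfl fun P' _ => ?_
      rw [map_mul]; ring
    rw [← h1, Complex.mul_conj]
    simp [Complex.normSq_eq_norm_sq, ← Complex.ofReal_pow]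
  have hsum_int : Integrable (fun x => ∑ P ∈ 𝒯, ∑ P' ∈ 𝒯,
      (c P * (starRingEnd ℂ) (c P')) * (Φ P x * (starRingEnd ℂ) (Φ P' x))) volume := by
    apply integrable_finset_sum
    intro P hP
    apply integrable_finset_sum
    intro P' hP'
    exact (hIprod P hP P' hP').const_mul _
  calc (∫ x : ℝ, ‖∑ P ∈ 𝒯, c P * Φ P x‖^2)
      = ∫ x, (∑ P ∈ 𝒯, ∑ P' ∈ 𝒯, (c P * (starRingEnd ℂ) (c P')) *
          (Φ P x * (starRingEnd ℂ) (Φ P' x))).re := by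
        congr 1; funext x; exact hptw x
    _ = (∫ x, ∑ P ∈ 𝒯, ∑ P' ∈ 𝒯, (c P * (starRingEnd ℂ) (c P')) *
          (Φ P x * (starRingEnd ℂ) (Φ P' x))).re := by
        rw [← RCLike.re_eq_complex_re]
        exact integral_re hsum_int
    _ = (∑ P ∈ 𝒯, ∑ P' ∈ 𝒯, (c P * (starRingEnd ℂ) (c P')) *
          ∫ x, Φ P x * (starRingEnd ℂ) (Φ P' x)).re := by
        congr 1
        rw [integral_finset_sum _ (fun P hP => integrable_finset_sum _
          (fun P' hP' => (hIprod P hP P' hP').const_mul _))]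
        refine Finset.sum_congr rfl fun P hP => ?_
        rw [integral_finset_sum _ (fun P' hP' => (hIprod P hP P' hP').const_mul _)]
        refine Finset.sum_congr rfl fun P' hP' => ?_
        rw [integral_const_mul]

lemma kap_sub_symm (a b : ℤ) : kap (a - b) = kap (b - a) := by
  unfold kap
  rw [show ((a - b : ℤ):ℝ) = -((b - a : ℤ):ℝ) by push_cast; ring, abs_neg]

lemma omega_eq_snd (k : ℤ) {P P' : ℤ × ℝ} (h : tileOmega k P = tileOmega k P') :
    P.2 = P'.2 := by
  have h2k : (0:ℝ) < (2:ℝ)^k := zpow_pos two_pos _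
  have h1 : P.2 ∈ tileOmega k P := by
    simp only [tileOmega, Set.mem_Icc]
    constructor <;> linarith
  have h2 : P'.2 ∈ tileOmega k P' := by
    simp only [tileOmega, Set.mem_Icc]
    constructor <;> linarith
  rw [h] at h1
  rw [← h] at h2
  simp only [tileOmega, Set.mem_Icc] at h1 h2
  exact le_antisymm h2.1 h1.1

lemma schur (𝒯 : Finset (ℤ × ℝ)) (q : (ℤ × ℝ) → (ℤ × ℝ) → ℝ) (c : (ℤ × ℝ) → ℂ) (S : ℝ)
    (hq0 : ∀ P P', 0 ≤ q P P') (hqsymm : ∀ P P', q P P' = q P' P)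
    (hrow : ∀ P ∈ 𝒯, (∑ P' ∈ 𝒯, q P P') ≤ S) :
    (∑ P ∈ 𝒯, ∑ P' ∈ 𝒯, q P P' * (‖c P‖ * ‖c P'‖)) ≤ S * ∑ P ∈ 𝒯, ‖c P‖^2 := by
  calc (∑ P ∈ 𝒯, ∑ P' ∈ 𝒯, q P P' * (‖c P‖ * ‖c P'‖))
      ≤ ∑ P ∈ 𝒯, ∑ P' ∈ 𝒯, ((q P P' * ‖c P‖^2)/2 + (q P P' * ‖c P'‖^2)/2) := by
        refine Finset.sum_le_sum fun P _ => Finset.sum_le_sum fun P' _ => ?_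
        have h1 : ‖c P‖ * ‖c P'‖ ≤ (‖c P‖^2 + ‖c P'‖^2)/2 := by
          nlinarith [sq_nonneg (‖c P‖ - ‖c P'‖)]
        have := mul_le_mul_of_nonneg_left h1 (hq0 P P')
        linarith
    _ = (∑ P ∈ 𝒯, ∑ P' ∈ 𝒯, (q P P' * ‖c P‖^2)/2)
        + ∑ P ∈ 𝒯, ∑ P' ∈ 𝒯, (q P P' * ‖c P'‖^2)/2 := by
        rw [← Finset.sum_add_distrib]
        refine Finset.sum_congr rfl fun P _ => ?_
        rw [← Finset.sum_add_distrib]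
    _ = ∑ P ∈ 𝒯, ∑ P' ∈ 𝒯, q P P' * ‖c P‖^2 := by
        have hsw : (∑ P ∈ 𝒯, ∑ P' ∈ 𝒯, (q P P' * ‖c P'‖^2)/2)
            = ∑ P ∈ 𝒯, ∑ P' ∈ 𝒯, (q P P' * ‖c P‖^2)/2 := by
          rw [Finset.sum_comm]
          refine Finset.sum_congr rfl fun P _ => Finset.sum_congr rfl fun P' _ => ?_
          rw [hqsymm]
        rw [hsw, ← Finset.sum_add_distrib]
        refine Finset.sum_congr rfl fun P _ => ?_
        rw [← Finset.sum_add_distrib]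
        refine Finset.sum_congr rfl fun P' _ => ?_
        ring
    _ = ∑ P ∈ 𝒯, (∑ P' ∈ 𝒯, q P P') * ‖c P‖^2 := by
        refine Finset.sum_congr rfl fun P _ => ?_
        rw [Finset.sum_mul]
    _ ≤ ∑ P ∈ 𝒯, S * ‖c P‖^2 :=
        Finset.sum_le_sum fun P hP => mul_le_mul_of_nonneg_right (hrow P hP) (sq_nonneg _)
    _ = S * ∑ P ∈ 𝒯, ‖c P‖^2 := by rw [Finset.mul_sum]

lemma main_est (k : ℤ) {A : ℝ} (hA : 0 < A) (𝒯 : Finset (ℤ × ℝ))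
    (hdich : ∀ P ∈ 𝒯, ∀ P' ∈ 𝒯, P ≠ P' →
      (tileOmega k P = tileOmega k P' ∧ tileI k P ∩ tileI k P' = ∅) ∨
      tileOmega910 k P ∩ tileOmega910 k P' = ∅)
    (Φ : ℤ × ℝ → ℝ → ℂ)
    (hΦ : ∀ P ∈ 𝒯,
      MemLp (Φ P) 2 volume ∧
      Function.support (FourierTransform.fourier (Φ P)) ⊆ tileOmega910 k P ∧
      ∀ x : ℝ, ‖Φ P x‖ ≤
        A * Real.sqrt ((2:ℝ)^k) * (1 + (2:ℝ)^k * Metric.infDist x (tileI k P)) ^ (-(1000:ℝ)))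
    (c : (ℤ × ℝ) → ℂ) :
    (∫ x : ℝ, ‖∑ P ∈ 𝒯, c P * Φ P x‖^2)
      ≤ (Kconst * (S0 + 1) + 1) * A^2 * ∑ P ∈ 𝒯, ‖c P‖^2 := by
  classical
  have hA0 : 0 ≤ A := hA.le
  have hm : ∀ P ∈ 𝒯, AEStronglyMeasurable (Φ P) volume :=
    fun P hP => ((hΦ P hP).1).aestronglyMeasurable
  have hd : ∀ P ∈ 𝒯, ∀ x, ‖Φ P x‖ ≤
      A * Real.sqrt ((2:ℝ)^k) * (1 + (2:ℝ)^k * Metric.infDist x (tileI k P)) ^ (-(1000:ℝ)) :=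
    fun P hP => (hΦ P hP).2.2
  have hIprod : ∀ P ∈ 𝒯, ∀ P' ∈ 𝒯,
      Integrable (fun x => Φ P x * (starRingEnd ℂ) (Φ P' x)) volume :=
    fun P hP P' hP' =>
      pair_integrable k hA0 P P' (hm P hP) (hm P' hP') (hd P hP) (hd P' hP')
  have hE : ∀ P ∈ 𝒯, ∀ P' ∈ 𝒯,
      ‖∫ x, Φ P x * (starRingEnd ℂ) (Φ P' x)‖ ≤ Kconst * A^2 * kap (P.1 - P'.1) :=
    fun P hP P' hP' =>
      pair_norm_integral_le k hA0 P P' (hm P hP) (hm P' hP') (hd P hP) (hd P' hP')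
  have hzero : ∀ P ∈ 𝒯, ∀ P' ∈ 𝒯, P.2 ≠ P'.2 →
      (∫ x, Φ P x * (starRingEnd ℂ) (Φ P' x)) = 0 := by
    intro P hP P' hP' hw
    have hne : P ≠ P' := fun h => hw (congrArg Prod.snd h)
    rcases hdich P hP P' hP' hne with ⟨hom, _⟩ | hdisj
    · exact absurd (omega_eq_snd k hom) hw
    · refine fourier_mul_conj_eq_zero
        (decay_integrable k hA0 P (hm P hP) (hd P hP))
        (decay_integrable k hA0 P' (hm P' hP') (hd P' hP'))
        (decay_bounded k hA0 P' (hd P' hP')) ?_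
      intro ξ
      by_contra hcon
      push_neg at hcon
      have h1 : ξ ∈ tileOmega910 k P := (hΦ P hP).2.1 (Function.mem_support.2 hcon.1)
      have h2 : ξ ∈ tileOmega910 k P' := (hΦ P' hP').2.1 (Function.mem_support.2 hcon.2)
      rw [Set.eq_empty_iff_forall_notMem] at hdisj
      exact hdisj ξ ⟨h1, h2⟩
  rw [expand_L2 𝒯 Φ c hIprod]
  have step1 : (∑ P ∈ 𝒯, ∑ P' ∈ 𝒯, (c P * (starRingEnd ℂ) (c P')) *
        ∫ x, Φ P x * (starRingEnd ℂ) (Φ P' x)).re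
      ≤ ∑ P ∈ 𝒯, ∑ P' ∈ 𝒯,
          (if P'.2 = P.2 then Kconst * A^2 * kap (P.1 - P'.1) else 0) * (‖c P‖ * ‖c P'‖) := by
    rw [Complex.re_sum]
    refine Finset.sum_le_sum fun P hP => ?_
    rw [Complex.re_sum]
    refine Finset.sum_le_sum fun P' hP' => ?_
    by_cases hw : P'.2 = P.2
    · rw [if_pos hw]
      have hre := Complex.re_le_norm ((c P * (starRingEnd ℂ) (c P')) *
        ∫ x, Φ P x * (starRingEnd ℂ) (Φ P' x))
      calc ((c P * (starRingEnd ℂ) (c P')) * ∫ x, Φ P x * (starRingEnd ℂ) (Φ P' x)).re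
          ≤ ‖(c P * (starRingEnd ℂ) (c P')) * ∫ x, Φ P x * (starRingEnd ℂ) (Φ P' x)‖ := hre
        _ = ‖c P‖ * ‖c P'‖ * ‖∫ x, Φ P x * (starRingEnd ℂ) (Φ P' x)‖ := by
            rw [norm_mul, norm_mul, RCLike.norm_conj]
        _ ≤ ‖c P‖ * ‖c P'‖ * (Kconst * A^2 * kap (P.1 - P'.1)) := by
            apply mul_le_mul_of_nonneg_left (hE P hP P' hP') (by positivity)
        _ = (Kconst * A^2 * kap (P.1 - P'.1)) * (‖c P‖ * ‖c P'‖) := by ring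
    · rw [if_neg hw, hzero P hP P' hP' (fun h => hw h.symm), mul_zero]
      simp
  refine le_trans step1 ?_
  have hq0 : ∀ P P' : ℤ × ℝ,
      0 ≤ (if P'.2 = P.2 then Kconst * A^2 * kap (P.1 - P'.1) else 0) := by
    intro P P'
    split
    · have := kap_nonneg (P.1 - P'.1); have := Kconst_pos; positivity
    · exact le_refl 0
  have hqsymm : ∀ P P' : ℤ × ℝ,
      (if P'.2 = P.2 then Kconst * A^2 * kap (P.1 - P'.1) else 0)
        = (if P.2 = P'.2 then Kconst * A^2 * kap (P'.1 - P.1) else 0) := by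
    intro P P'
    by_cases hw : P'.2 = P.2
    · rw [if_pos hw, if_pos hw.symm, kap_sub_symm]
    · rw [if_neg hw, if_neg (fun hh => hw hh.symm)]
  have hrow : ∀ P ∈ 𝒯,
      (∑ P' ∈ 𝒯, if P'.2 = P.2 then Kconst * A^2 * kap (P.1 - P'.1) else 0)
        ≤ Kconst * A^2 * S0 := by
    intro P _
    have hfact : ∀ P' : ℤ × ℝ,
        (if P'.2 = P.2 then Kconst * A^2 * kap (P.1 - P'.1) else 0)
          = Kconst * A^2 * (if P'.2 = P.2 then kap (P.1 - P'.1) else 0) := by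
      intro P'
      split <;> simp
    simp_rw [hfact]
    rw [← Finset.mul_sum]
    exact mul_le_mul_of_nonneg_left (inner_sum_le 𝒯 P)
      (by have := Kconst_pos; positivity)
  have hschur := schur 𝒯
    (fun P P' => if P'.2 = P.2 then Kconst * A^2 * kap (P.1 - P'.1) else 0) c
    (Kconst * A^2 * S0) hq0 hqsymm hrow
  refine le_trans hschur ?_
  have hsumsq : 0 ≤ ∑ P ∈ 𝒯, ‖c P‖^2 := Finset.sum_nonneg fun P _ => sq_nonneg _
  have hKS : Kconst * A^2 * S0 ≤ (Kconst * (S0 + 1) + 1) * A^2 := by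
    have hK := Kconst_pos
    have hS := S0_nonneg
    nlinarith [sq_nonneg A]
  calc Kconst * A^2 * S0 * ∑ P ∈ 𝒯, ‖c P‖^2
      ≤ (Kconst * (S0 + 1) + 1) * A^2 * ∑ P ∈ 𝒯, ‖c P‖^2 :=
        mul_le_mul_of_nonneg_right hKS hsumsq

end FSAO2

/-- **Fixed-scale almost orthogonality of wave packets.** For a finite collection of tiles
of a fixed scale whose frequency data are either equal with disjoint spatial intervals, or
have disjoint `(9/10)`-dilated frequency intervals, the wave-packet synthesis operator is
almost orthogonal: `‖Σ_P ⟨F,Φ_P⟩Φ_P‖²_{L²} ≤ C A² Σ_P |⟨F,Φ_P⟩|²`. -/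
theorem fixed_scale_almost_orthogonality :
    ∃ C : ℝ, 0 < C ∧
    ∀ (k : ℤ) (A : ℝ), 0 < A →
    ∀ 𝒯 : Finset (ℤ × ℝ),
    (∀ P ∈ 𝒯, ∀ P' ∈ 𝒯, P ≠ P' →
      (tileOmega k P = tileOmega k P' ∧ tileI k P ∩ tileI k P' = ∅) ∨
      tileOmega910 k P ∩ tileOmega910 k P' = ∅) →
    ∀ Φ : ℤ × ℝ → ℝ → ℂ,
    (∀ P ∈ 𝒯,
      MemLp (Φ P) 2 volume ∧
      Function.support (FourierTransform.fourier (Φ P)) ⊆ tileOmega910 k P ∧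
      ∀ x : ℝ, ‖Φ P x‖ ≤
        A * Real.sqrt ((2:ℝ)^k) * (1 + (2:ℝ)^k * Metric.infDist x (tileI k P)) ^ (-(1000:ℝ))) →
    ∀ F : ℝ → ℂ, MemLp F 2 volume →
      (∫ x : ℝ, ‖∑ P ∈ 𝒯, (∫ y : ℝ, F y * (starRingEnd ℂ) (Φ P y)) * Φ P x‖^2) ≤
        C * A^2 * ∑ P ∈ 𝒯, ‖∫ y : ℝ, F y * (starRingEnd ℂ) (Φ P y)‖^2 := by
  refine ⟨FSAO2.Kconst * (FSAO2.S0 + 1) + 1, ?_, ?_⟩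
  · have h1 : 0 < FSAO2.Kconst * (FSAO2.S0 + 1) :=
      mul_pos FSAO2.Kconst_pos (by linarith [FSAO2.S0_nonneg])
    linarith
  · intro k A hA 𝒯 hdich Φ hΦ F hF
    exact FSAO2.main_est k hA 𝒯 hdich Φ hΦ (fun P => ∫ y, F y * (starRingEnd ℂ) (Φ P y))
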